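/- Let G be a locally compact Hausdorff topological group, Γ a discrete subgroup of G, and f : G → ℂ a continuous function with compact support. Then the kernel function K : G × G → ℂ defined by K(x, y) = ∑_{γ∈Γ} f(x⁻¹ γ y) (for each (x,y) the sum has finitely many nonzero terms) is continuous on G × G. -/

import Mathlib

open scoped Pointwise


/-- If `Γ` is a discrete subgroup of a locally compact Hausdorff topological group `G`
and `f : G → ℂ` is continuous with compact support, then the kernel
`K(x, y) = ∑_{γ∈Γ} f(x⁻¹ γ y)` (a finite sum for each `(x, y)`) is continuous on `G × G`. -/
theorem kernel_continuous {G : Type*} [Group G] [TopologicalSpace G]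
    [IsTopologicalGroup G] [LocallyCompactSpace G] [T2Space G]
    (Γ : Subgroup G) [DiscreteTopology Γ]
    (f : G → ℂ) (hf : Continuous f) (hsupp : HasCompactSupport f) :
    Continuous (fun p : G × G => ∑ᶠ γ : Γ, f (p.1⁻¹ * γ * p.2)) := by
  rw [continuous_iff_continuousAt]
  rintro ⟨x₀, y₀⟩
  obtain ⟨U, hUc, hU⟩ := exists_compact_mem_nhds x₀
  obtain ⟨V, hVc, hV⟩ := exists_compact_mem_nhds y₀
  set C := tsupport f with hC
  have hDc : IsCompact (U * C * V⁻¹) := (hUc.mul hsupp).mul hVc.inv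
  have hclosed : IsClosed (Γ : Set G) := Subgroup.isClosed_of_discrete
  -- the set of relevant γ is finite
  have hfin : ((Γ : Set G) ∩ (U * C * V⁻¹)).Finite := by
    have hcpt : IsCompact ((Γ : Set G) ∩ (U * C * V⁻¹)) :=
      hDc.inter_left hclosed
    have : DiscreteTopology ((Γ : Set G) ∩ (U * C * V⁻¹) : Set G) :=
      DiscreteTopology.of_subset (inferInstance : DiscreteTopology Γ)
        Set.inter_subset_left
    exact hcpt.finite (isDiscrete_iff_discreteTopology.mpr this)
  have hfinΓ : {γ : Γ | (γ : G) ∈ U * C * V⁻¹}.Finite := by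
    have := hfin.preimage (f := fun γ : Γ => (γ : G)) Subtype.val_injective.injOn
    refine this.subset ?_
    intro γ hγ
    exact ⟨γ.2, hγ⟩
  set S : Finset Γ := hfinΓ.toFinset with hS
  have key : ∀ p : G × G, p ∈ U ×ˢ V →
      (∑ᶠ γ : Γ, f (p.1⁻¹ * γ * p.2)) = ∑ γ ∈ S, f (p.1⁻¹ * γ * p.2) := by
    rintro ⟨x, y⟩ ⟨hx, hy⟩
    refine finsum_eq_finset_sum_of_support_subset _ ?_
    intro γ hγ
    simp only [hS, Set.Finite.coe_toFinset, Set.mem_setOf_eq]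
    have hmem : x⁻¹ * γ * y ∈ C := subset_tsupport f hγ
    have : (γ : G) = x * (x⁻¹ * γ * y) * y⁻¹ := by group
    rw [this]
    exact Set.mul_mem_mul (Set.mul_mem_mul hx hmem) (Set.inv_mem_inv.2 hy)
  have hcont : Continuous (fun p : G × G => ∑ γ ∈ S, f (p.1⁻¹ * γ * p.2)) := by
    refine continuous_finset_sum _ fun γ _ => ?_
    exact hf.comp (((continuous_fst.inv).mul continuous_const).mul continuous_snd)
  refine hcont.continuousAt.congr ?_
  have hnhds : U ×ˢ V ∈ nhds (x₀, y₀) := prod_mem_nhds hU hV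
  exact Filter.eventuallyEq_of_mem hnhds fun p hp => (key p hp).symm
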